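/- arXiv:1912.08452 — 2 statements merged into one kernel-verified Lean document; each statement's English description precedes it below -/
import Mathlib

section
/- Let m ≥ 1, let T be an invertible m×m complex matrix, set |T| := (T*T)^{1/2} and U := T·|T|⁻¹ (so T = U|T| is the polar decomposition with U unitary). Then (U|T| + |T|U)/2 = T if and only if T is normal (i.e., T*T = TT*). -/
open Matrix
open scoped ComplexOrder

/-- The square root of a positive semidefinite matrix, as defined in Mathlib (Dec 2024). -/
noncomputable def Matrix.PosSemidef.sqrt {𝕜 : Type*} [RCLike 𝕜] {n : Type*} [Fintype n]
    [DecidableEq n] {A : Matrix n n 𝕜} (hA : A.PosSemidef) : Matrix n n 𝕜 :=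
  (hA.1.eigenvectorUnitary : Matrix n n 𝕜) * diagonal (((↑) : ℝ → 𝕜) ∘ (√·) ∘ hA.1.eigenvalues) *
    (star hA.1.eigenvectorUnitary : Matrix n n 𝕜)

section sqrtPort

open scoped MatrixOrder

lemma Matrix.PosSemidef.sqrt_eq_cfcSqrt {𝕜 : Type*} [RCLike 𝕜] {n : Type*} [Fintype n]
    [DecidableEq n] {A : Matrix n n 𝕜} (hA : A.PosSemidef) : hA.sqrt = CFC.sqrt A := by
  rw [CFC.sqrt_eq_cfc, cfc_nnreal_eq_real _ A, hA.1.cfc_eq]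
  simp only [IsHermitian.cfc, Matrix.PosSemidef.sqrt, Unitary.conjStarAlgAut_apply, Real.coe_sqrt,
    Real.coe_toNNReal']
  congr 3
  funext i
  simp [hA.eigenvalues_nonneg i]

lemma Matrix.PosSemidef.sqrt_mul_self {𝕜 : Type*} [RCLike 𝕜] {n : Type*} [Fintype n]
    [DecidableEq n] {A : Matrix n n 𝕜} (hA : A.PosSemidef) : hA.sqrt * hA.sqrt = A := by
  rw [hA.sqrt_eq_cfcSqrt]
  exact CFC.sqrt_mul_sqrt_self A hA.nonneg

lemma Matrix.PosSemidef.posSemidef_sqrt {𝕜 : Type*} [RCLike 𝕜] {n : Type*} [Fintype n]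
    [DecidableEq n] {A : Matrix n n 𝕜} (hA : A.PosSemidef) : hA.sqrt.PosSemidef := by
  rw [hA.sqrt_eq_cfcSqrt]
  exact (CFC.sqrt_nonneg A).posSemidef

lemma Matrix.PosSemidef.eq_of_sq_eq_sq {𝕜 : Type*} [RCLike 𝕜] {n : Type*} [Fintype n]
    [DecidableEq n] {A B : Matrix n n 𝕜} (hA : A.PosSemidef) (hB : B.PosSemidef)
    (h : A ^ 2 = B ^ 2) : A = B :=
  (CFC.mul_self_eq_mul_self_iff A B hA.nonneg hB.nonneg).mp (by rw [← sq, ← sq]; exact h)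

end sqrtPort

/-- For an invertible matrix `T` with polar decomposition `T = U|T|`
(`|T| = (T*T)^{1/2}`, `U = T|T|⁻¹`), the mean transformation satisfies
`(U|T| + |T|U)/2 = T` iff `T` is normal. -/
theorem stmt_4 (m : ℕ) (hm : 1 ≤ m) (T : Matrix (Fin m) (Fin m) ℂ) (hT : IsUnit T.det) :
    ((2 : ℂ)⁻¹ •
        (T * (Matrix.PosSemidef.sqrt (Matrix.posSemidef_conjTranspose_mul_self T))⁻¹ *
            Matrix.PosSemidef.sqrt (Matrix.posSemidef_conjTranspose_mul_self T) +
          Matrix.PosSemidef.sqrt (Matrix.posSemidef_conjTranspose_mul_self T) *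
            (T * (Matrix.PosSemidef.sqrt (Matrix.posSemidef_conjTranspose_mul_self T))⁻¹))) = T ↔
      Tᴴ * T = T * Tᴴ := by
  set hTT := Matrix.posSemidef_conjTranspose_mul_self T with hTTdef
  set P := hTT.sqrt with hPdef
  have hPP : P * P = Tᴴ * T := hTT.sqrt_mul_self
  have hPH : Pᴴ = P := hTT.posSemidef_sqrt.1
  -- P is invertible
  have hPdet : IsUnit P.det := by
    have h1 : IsUnit (P.det * P.det) := by
      rw [← Matrix.det_mul, hPP, Matrix.det_mul, Matrix.det_conjTranspose]
      exact hT.star.mul hT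
    exact isUnit_of_mul_isUnit_left h1
  have hPinv : P * P⁻¹ = 1 := Matrix.mul_nonsing_inv P hPdet
  have hPinv' : P⁻¹ * P = 1 := Matrix.nonsing_inv_mul P hPdet
  have hTinv : T * T⁻¹ = 1 := Matrix.mul_nonsing_inv T hT
  have hTinv' : T⁻¹ * T = 1 := Matrix.nonsing_inv_mul T hT
  have hsimp : T * P⁻¹ * P = T := by rw [mul_assoc, hPinv', mul_one]
  constructor
  · intro h
    rw [hsimp] at h
    have h3 : P * (T * P⁻¹) = T := by
      have h2 := congrArg (fun M => (2 : ℂ) • M) h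
      simp only [smul_smul] at h2
      norm_num at h2
      rw [two_smul] at h2
      exact add_left_cancel h2
    have hPT : P * T = T * P := by
      calc P * T = P * (T * P⁻¹) * P := by rw [mul_assoc, mul_assoc, hPinv', mul_one]
        _ = T * P := by rw [h3]
    have hP2T : (Tᴴ * T) * T = T * (Tᴴ * T) := by
      rw [← hPP]
      calc P * P * T = P * (P * T) := mul_assoc _ _ _
        _ = P * (T * P) := by rw [hPT]
        _ = P * T * P := (mul_assoc _ _ _).symm
        _ = T * P * P := by rw [hPT]
        _ = T * (P * P) := mul_assoc _ _ _
    have := congrArg (fun M => M * T⁻¹) hP2T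
    simpa [mul_assoc, hTinv, hTinv'] using this
  · intro h
    have hPinvH : (P⁻¹)ᴴ = P⁻¹ := by
      rw [Matrix.conjTranspose_nonsing_inv, hPH]
    -- S := T P⁻¹ Tᴴ equals P, by uniqueness of the psd square root
    have hSP : T * P⁻¹ * Tᴴ = P := by
      have hSform : (T * P⁻¹) * P * (T * P⁻¹)ᴴ = T * P⁻¹ * Tᴴ := by
        rw [Matrix.conjTranspose_mul, hPinvH, ← mul_assoc, hsimp]
      have hpsd : (T * P⁻¹ * Tᴴ).PosSemidef := by
        rw [← hSform]
        exact hTT.posSemidef_sqrt.mul_mul_conjTranspose_same (T * P⁻¹)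
      refine hpsd.eq_of_sq_eq_sq hTT.posSemidef_sqrt ?_
      have hTHT : Tᴴ * (T * P⁻¹) = P := by
        calc Tᴴ * (T * P⁻¹) = (P * P) * P⁻¹ := by rw [← mul_assoc, ← hPP]
          _ = P := by rw [mul_assoc, hPinv, mul_one]
      calc (T * P⁻¹ * Tᴴ) ^ 2 = T * P⁻¹ * (Tᴴ * (T * P⁻¹)) * Tᴴ := by
            rw [pow_two]; noncomm_ring
        _ = T * P⁻¹ * P * Tᴴ := by rw [hTHT]
        _ = T * Tᴴ := by rw [hsimp]
        _ = P ^ 2 := by rw [← h, ← hPP, pow_two]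
    have h3 : P * (T * P⁻¹) = T := by
      calc P * (T * P⁻¹) = T * P⁻¹ * Tᴴ * (T * P⁻¹) := by rw [hSP]
        _ = T * P⁻¹ * (Tᴴ * T) * P⁻¹ := by noncomm_ring
        _ = T * P⁻¹ * (P * P) * P⁻¹ := by rw [hPP]
        _ = T := by rw [← mul_assoc, hsimp, mul_assoc, hPinv, mul_one]
    rw [hsimp, h3]
    rw [← two_smul ℂ T, smul_smul]
    norm_num
end

section
/- Let m ≥ 1 and let T be an invertible m×m complex matrix with polar decomposition T = U·P, where U is unitary and P = (T*T)^{1/2} has spectral decomposition P = Σ_{i=1}^{k} s_i E_i with s_i > 0 and Hermitian idempotent matrices E_i satisfying E_iE_j = 0 for i ≠ j and Σ_i E_i = I. Let φ, ψ : ℝ_{>0} × ℝ_{>0} → ℝ_{>0} be functions with φ(s,s) = ψ(s,s) = s for all s > 0, and suppose that for every m×m complex matrix X one has ‖ Σ_{i,j=1}^{k} φ(s_i,s_j) E_i X E_j ‖ ≤ ‖ Σ_{i,j=1}^{k} ψ(s_i,s_j) E_i X E_j ‖, where ‖·‖ is the operator norm with respect to the Euclidean norm on ℂ^m. Then the closure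 of the numerical range of Δ_φ(T) := Σ_{i,j} φ(s_i,s_j) E_i U E_j is contained in the closure of the numerical range of Δ_ψ(T) := Σ_{i,j} ψ(s_i,s_j) E_i U E_j. -/
open scoped ComplexConjugate

variable {H : Type*} [NormedAddCommGroup H] [InnerProductSpace ℂ H]

local notation "⟪" x ", " y "⟫" => @inner ℂ _ _ x y

/-- numerical range of an operator -/
def nrSet (B : H →L[ℂ] H) : Set ℂ := {z : ℂ | ∃ x : H, ‖x‖ = 1 ∧ (inner ℂ x (B x) : ℂ) = z}

theorem nrSet_convex (B : H →L[ℂ] H) : Convex ℝ (nrSet B) := by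
  rintro a ⟨x0, hx0, hxa⟩ b hb p q hp hq hpq
  rcases eq_or_ne a b with rfl | hab
  · obtain ⟨y, hy, hyb⟩ := hb
    exact ⟨y, hy, by rw [hyb, ← add_smul, hpq, one_smul]⟩
  obtain ⟨y, hy, hyb⟩ := hb
  set d : ℂ := a - b with hd
  have hd0 : d ≠ 0 := sub_ne_zero.mpr hab
  -- choose the phase μ
  set pC : ℂ := (⟪x0, B y⟫ - b * ⟪x0, y⟫) / d with hpC
  set qC : ℂ := (⟪y, B x0⟫ - b * ⟪y, x0⟫) / d with hqC
  set wC : ℂ := qC - conj pC with hwC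
  set μ : ℂ := if wC = 0 then 1 else conj wC / (‖wC‖ : ℂ) with hμdef
  have hμ1 : ‖μ‖ = 1 := by
    rw [hμdef]
    split_ifs with h
    · simp
    · rw [norm_div, RCLike.norm_conj]
      simp only [Complex.norm_real, Real.norm_eq_abs, abs_norm]
      exact div_self (norm_ne_zero_iff.mpr h)
  have hμw : (μ * wC).im = 0 := by
    rw [hμdef]
    split_ifs with h
    · simp [h]
    · rw [div_mul_eq_mul_div, ← Complex.normSq_eq_conj_mul_self]
      simp [Complex.div_im]
  have hμ0 : μ ≠ 0 := by
    intro h; rw [h] at hμ1; simp at hμ1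
  set x : H := μ • x0 with hxdef
  have hx : ‖x‖ = 1 := by rw [hxdef, norm_smul, hμ1, hx0, one_mul]
  have hxa' : ⟪x, B x⟫ = a := by
    have hcm : conj μ * μ = 1 := by
      rw [← Complex.normSq_eq_conj_mul_self, Complex.normSq_eq_norm_sq, hμ1]
      norm_num
    rw [hxdef, map_smul, inner_smul_left, inner_smul_right, ← mul_assoc, hcm, one_mul, hxa]
  -- τ and its realness
  set τ : ℂ := (⟪x, B y⟫ + ⟪y, B x⟫ - b * ⟪x, y⟫ - b * ⟪y, x⟫) / d with hτ
  have hτeq : τ = conj μ * pC + μ * qC := by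
    rw [hτ, hxdef, map_smul, inner_smul_left, inner_smul_right, inner_smul_left,
      inner_smul_right, hpC, hqC]
    field_simp
    ring
  have hτim : τ.im = 0 := by
    rw [hτeq]
    have : (conj μ * pC + μ * qC).im = (μ * (qC - conj pC)).im := by
      simp [Complex.add_im, Complex.mul_im, Complex.sub_im, Complex.sub_re]
      ring
    rw [this, ← hwC, hμw]
  -- the path from x to y
  set u : ℝ → H := fun t => ((1 - t : ℝ) : ℂ) • x + ((t : ℝ) : ℂ) • y with hu
  have hdτ : d * τ = ⟪x, B y⟫ + ⟪y, B x⟫ - b * ⟪x, y⟫ - b * ⟪y, x⟫ := by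
    rw [hτ]; field_simp
  have hxx : ⟪x, x⟫ = 1 := by
    rw [inner_self_eq_norm_sq_to_K, hx]; norm_num
  have hyy : ⟪y, y⟫ = 1 := by
    rw [inner_self_eq_norm_sq_to_K, hy]; norm_num
  have expF : ∀ t : ℝ, ⟪u t, B (u t)⟫ = (1 - (t:ℂ))^2 * a + (t:ℂ)^2 * b
      + (t:ℂ) * (1 - (t:ℂ)) * (⟪x, B y⟫ + ⟪y, B x⟫) := by
    intro t
    simp only [hu, map_add, map_smul, inner_add_left, inner_add_right,
      inner_smul_left, inner_smul_right, Complex.conj_ofReal, hxa', hyb]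
    push_cast
    ring
  have expN : ∀ t : ℝ, ((‖u t‖ : ℂ))^2 = (1 - (t:ℂ))^2 + (t:ℂ)^2
      + (t:ℂ) * (1 - (t:ℂ)) * (⟪x, y⟫ + ⟪y, x⟫) := by
    intro t
    rw [show ((‖u t‖:ℂ))^2 = ⟪u t, u t⟫ from (inner_self_eq_norm_sq_to_K (u t)).symm]
    simp only [hu, inner_add_left, inner_add_right,
      inner_smul_left, inner_smul_right, Complex.conj_ofReal, hxx, hyy]
    push_cast
    ring
  have hF : ∀ t : ℝ, ⟪u t, B (u t)⟫
      = b * ((‖u t‖ : ℂ))^2 + d * ((1 - (t:ℂ))^2 + (t:ℂ) * (1 - (t:ℂ)) * τ) := by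
    intro t
    rw [expF t, expN t]
    linear_combination (-((t:ℂ) * (1 - (t:ℂ)))) * hdτ - (1 - (t:ℂ))^2 * hd
  -- positivity of the norm along the path
  have hxy0 : x + y ≠ 0 := by
    intro h
    have hyx : y = -x := by
      have := eq_neg_of_add_eq_zero_right h
      rw [this]
    apply hab
    rw [← hxa', ← hyb, hyx, map_neg, inner_neg_neg]
  have hρle : (⟪x, y⟫).re ≤ 1 := by
    have h1 : (⟪x, y⟫).re ≤ ‖(⟪x, y⟫ : ℂ)‖ := Complex.re_le_norm _
    have h2 := norm_inner_le_norm (𝕜 := ℂ) x y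
    rw [hx, hy] at h2
    simpa using h1.trans h2
  have hρgt : -1 < (⟪x, y⟫).re := by
    have h1 : (0:ℝ) < ‖x + y‖^2 := pow_pos (norm_pos_iff.mpr hxy0) 2
    have h2 := norm_add_sq (𝕜 := ℂ) x y
    rw [hx, hy] at h2
    simp only [RCLike.re_to_complex] at h2
    nlinarith
  have hns : ∀ t : ℝ, ‖u t‖^2 = (1-t)^2 + t^2 + t*(1-t)*(2*(⟪x, y⟫).re) := by
    intro t
    have h3 : ⟪x, y⟫ + ⟪y, x⟫ = ((2*(⟪x, y⟫).re : ℝ) : ℂ) := by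
      rw [← inner_conj_symm y x, Complex.add_conj]
    have h4 := expN t
    rw [h3] at h4
    have h5 : ((‖u t‖^2 : ℝ) : ℂ) = (((1-t)^2 + t^2 + t*(1-t)*(2*(⟪x, y⟫).re) : ℝ) : ℂ) := by
      push_cast
      rw [h4]
      push_cast
      ring
    exact_mod_cast h5
  have hupos : ∀ t ∈ Set.Icc (0:ℝ) 1, 0 < ‖u t‖ := by
    intro t ht
    obtain ⟨ht0, ht1⟩ := ht
    have h6 : 0 < ‖u t‖^2 := by
      rw [hns t]
      nlinarith [sq_nonneg (1 - 2*t), mul_nonneg (mul_nonneg ht0 (by linarith : (0:ℝ) ≤ 1 - t)) (by linarith : (0:ℝ) ≤ 1 + (⟪x, y⟫).re)]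
    nlinarith [norm_nonneg (u t)]
  have hucont : Continuous u := by
    rw [hu]
    exact ((Complex.continuous_ofReal.comp (continuous_const.sub continuous_id)).smul
      continuous_const).add (Complex.continuous_ofReal.smul continuous_const)
  -- the real function r
  set r : ℝ → ℝ := fun t => ((1-t)^2 + t*(1-t)*τ.re) / ‖u t‖^2 with hr
  have hrcont : ContinuousOn r (Set.Icc 0 1) := by
    apply ContinuousOn.div
    · fun_prop
    · exact ((hucont.norm.pow 2).continuousOn)
    · intro t ht
      exact (pow_pos (hupos t ht) 2).ne'
  have hu0 : u 0 = x := by simp [hu]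
  have hu1 : u 1 = y := by simp [hu]
  have hr0 : r 0 = 1 := by rw [hr]; simp only [hu0, hx]; norm_num
  have hr1 : r 1 = 0 := by rw [hr]; simp only [hu1, hy]; norm_num
  have hp1 : p ≤ 1 := by linarith
  obtain ⟨t₀, ht₀, hrt₀⟩ : ∃ t ∈ Set.Icc (0:ℝ) 1, r t = p := by
    have := intermediate_value_Icc' (zero_le_one) hrcont
    have hmem : p ∈ Set.Icc (r 1) (r 0) := by rw [hr0, hr1]; exact ⟨hp, hp1⟩
    obtain ⟨t, ht, hrt⟩ := this hmem
    exact ⟨t, ht, hrt⟩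
  set n : ℝ := ‖u t₀‖ with hndef
  have hn0 : 0 < n := hupos t₀ ht₀
  have hnne : (n:ℝ) ≠ 0 := hn0.ne'
  set v : H := ((n⁻¹ : ℝ) : ℂ) • u t₀ with hv
  have hvn : ‖v‖ = 1 := by
    rw [hv, norm_smul]
    simp only [Complex.norm_real, Real.norm_eq_abs, ← hndef]
    rw [abs_inv, abs_of_pos hn0]
    exact inv_mul_cancel₀ hnne
  refine ⟨v, hvn, ?_⟩
  have hvB : ⟪v, B v⟫ = (((n^2)⁻¹ : ℝ) : ℂ) * ⟪u t₀, B (u t₀)⟫ := by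
    rw [hv, map_smul, inner_smul_left, inner_smul_right, Complex.conj_ofReal]
    push_cast
    ring
  rw [hF t₀] at hvB
  have hτre : τ = ((τ.re : ℝ) : ℂ) := Complex.ext rfl (by simp [hτim])
  rw [hτre] at hvB
  have hnum : (1-t₀)^2 + t₀*(1-t₀)*τ.re = p * n^2 := by
    have := hrt₀
    rw [hr] at this
    field_simp at this
    rw [div_eq_iff (pow_ne_zero 2 (hupos t₀ ht₀).ne'), ← hndef] at this
    linarith [this]
  have hnumC : (1-(t₀:ℂ))^2 + (t₀:ℂ)*(1-(t₀:ℂ))*((τ.re : ℝ) : ℂ) = (p:ℂ) * (n:ℂ)^2 := by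
    have := congrArg (fun x : ℝ => (x : ℂ)) hnum
    push_cast at this
    convert this using 2 <;> push_cast <;> ring
  have hq1 : (q:ℝ) = 1 - p := by linarith
  rw [hvB, Complex.real_smul, Complex.real_smul, hq1]
  have hnCne : (n:ℂ) ≠ 0 := by exact_mod_cast hnne
  have hn2 : ((‖u t₀‖ : ℂ))^2 = (n:ℂ)^2 := by rw [← hndef]
  rw [hn2]
  push_cast
  field_simp
  linear_combination d * hnumC + ((p:ℂ) * (n:ℂ)^2) * hd

theorem nrSet_dist_le (A : H →L[ℂ] H) (z : ℂ) {w : ℂ} (hw : w ∈ closure (nrSet A)) :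
    dist w z ≤ ‖A - z • (1 : H →L[ℂ] H)‖ := by
  have hsub : nrSet A ⊆ Metric.closedBall z ‖A - z • (1 : H →L[ℂ] H)‖ := by
    rintro w' ⟨x, hx, hxw⟩
    have h1 : ((A - z • (1 : H →L[ℂ] H)) x) = A x - z • x := by
      simp [ContinuousLinearMap.sub_apply, ContinuousLinearMap.smul_apply,
        ContinuousLinearMap.one_apply]
    have h2 : ⟪x, (A - z • (1 : H →L[ℂ] H)) x⟫ = w' - z := by
      rw [h1, inner_sub_right, inner_smul_right, hxw, inner_self_eq_norm_sq_to_K, hx]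
      push_cast
      ring
    have h3 : ‖w' - z‖ ≤ ‖A - z • (1 : H →L[ℂ] H)‖ := by
      rw [← h2]
      calc ‖⟪x, (A - z • (1 : H →L[ℂ] H)) x⟫‖
          ≤ ‖x‖ * ‖(A - z • (1 : H →L[ℂ] H)) x‖ := norm_inner_le_norm _ _
        _ ≤ ‖x‖ * (‖A - z • (1 : H →L[ℂ] H)‖ * ‖x‖) := by
            gcongr
            exact (A - z • (1 : H →L[ℂ] H)).le_opNorm x
        _ = ‖A - z • (1 : H →L[ℂ] H)‖ := by rw [hx]; ring
    simpa [Metric.mem_closedBall, dist_eq_norm] using h3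
  exact closure_minimal hsub Metric.isClosed_closedBall hw

set_option maxHeartbeats 1000000 in
theorem nr_closure_subset {A B : H →L[ℂ] H} (hex : ∃ x : H, ‖x‖ = 1)
    (hn : ∀ z : ℂ, ‖A - z • (1 : H →L[ℂ] H)‖ ≤ ‖B - z • (1 : H →L[ℂ] H)‖) :
    closure (nrSet A) ⊆ closure (nrSet B) := by
  intro w hw
  by_contra hwB
  obtain ⟨f, ub, hfs, hfw⟩ := geometric_hahn_banach_closed_point
    ((nrSet_convex B).closure) isClosed_closure hwB
  set c : ℂ := (↑(f 1) : ℂ) + (↑(f Complex.I) : ℂ) * Complex.I with hc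
  have hcre : c.re = f 1 := by simp [hc]
  have hcim : c.im = f Complex.I := by simp [hc]
  have hfc : ∀ z : ℂ, f z = ((starRingEnd ℂ) c * z).re := by
    intro z
    have hz : z = (z.re : ℝ) • (1:ℂ) + (z.im : ℝ) • Complex.I := by
      simp [Complex.real_smul, Complex.re_add_im]
    have : f z = z.re * f 1 + z.im * f Complex.I := by
      conv_lhs => rw [hz]
      rw [map_add, map_smul, map_smul]
      simp [smul_eq_mul]
    rw [this, ← hcre, ← hcim]
    simp [Complex.mul_re, Complex.conj_re, Complex.conj_im]
    ring
  -- a point of the numerical range of B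
  obtain ⟨x₀, hx₀⟩ := hex
  have hmem0 : (⟪x₀, B x₀⟫ : ℂ) ∈ closure (nrSet B) := subset_closure ⟨x₀, hx₀, rfl⟩
  have hfb0 : f ⟪x₀, B x₀⟫ < ub := hfs _ hmem0
  have hfwub : ub < f w := hfw
  have hc0 : c ≠ 0 := by
    intro h
    rw [hfc] at hfb0 hfwub
    rw [h] at hfb0 hfwub
    simp at hfb0 hfwub
    linarith
  have hcpos : 0 < ‖c‖ := norm_pos_iff.mpr hc0
  set δ : ℝ := f w - ub with hδ
  have hδpos : 0 < δ := by rw [hδ]; linarith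
  set t : ℝ := max ((‖B‖^2 + 1)/(2*δ)) (2*|ub| / ‖c‖^2) with htdef
  have ht1 : (‖B‖^2 + 1)/(2*δ) ≤ t := le_max_left _ _
  have ht2 : 2*|ub| / ‖c‖^2 ≤ t := le_max_right _ _
  have ht0 : 0 < t := lt_of_lt_of_le (by positivity) ht1
  set M : ℝ := ‖B‖^2 + 2*t*ub + t^2*‖c‖^2 with hM
  have h2ub : 2*|ub| ≤ t*‖c‖^2 := by
    rw [div_le_iff₀ (by positivity)] at ht2
    linarith
  have hM0 : 0 ≤ M := by
    have h1 := mul_le_mul_of_nonneg_left h2ub ht0.le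
    have h2 := neg_abs_le ub
    nlinarith [sq_nonneg ‖B‖, mul_nonneg ht0.le (abs_nonneg ub)]
  -- pointwise bound
  have hfx : ∀ x : H, ((starRingEnd ℂ) c * ⟪x, B x⟫).re ≤ ub * ‖x‖^2 := by
    intro x
    rcases eq_or_ne x 0 with rfl | hx0'
    · simp
    · have hnx : (0:ℝ) < ‖x‖ := norm_pos_iff.mpr hx0'
      set xh : H := ((‖x‖⁻¹ : ℝ) : ℂ) • x with hxh
      have hxh1 : ‖xh‖ = 1 := by
        rw [hxh, norm_smul]
        simp only [Complex.norm_real, Real.norm_eq_abs, abs_inv, abs_norm]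
        exact inv_mul_cancel₀ hnx.ne'
      have hmem : (⟪xh, B xh⟫ : ℂ) ∈ closure (nrSet B) := subset_closure ⟨xh, hxh1, rfl⟩
      have hlt : ((starRingEnd ℂ) c * ⟪xh, B xh⟫).re < ub := by
        have := hfs _ hmem
        rwa [hfc] at this
      have hrel : ⟪xh, B xh⟫ = ((‖x‖⁻¹:ℝ):ℂ)^2 * ⟪x, B x⟫ := by
        rw [hxh, map_smul, inner_smul_left, inner_smul_right, Complex.conj_ofReal]
        ring
      have hxne : (‖x‖:ℂ) ≠ 0 := by exact_mod_cast hnx.ne'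
      have hrel2 : ⟪x, B x⟫ = ((‖x‖^2 : ℝ) : ℂ) * ⟪xh, B xh⟫ := by
        rw [hrel]
        push_cast
        field_simp
      have hre : ((starRingEnd ℂ) c * ⟪x, B x⟫).re
          = ‖x‖^2 * ((starRingEnd ℂ) c * ⟪xh, B xh⟫).re := by
        rw [hrel2, show (starRingEnd ℂ) c * (((‖x‖^2 : ℝ) : ℂ) * ⟪xh, B xh⟫)
          = ((‖x‖^2 : ℝ) : ℂ) * ((starRingEnd ℂ) c * ⟪xh, B xh⟫) from by ring]
        exact Complex.re_ofReal_mul _ _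
      rw [hre]
      calc ‖x‖^2 * ((starRingEnd ℂ) c * ⟪xh, B xh⟫).re
          ≤ ‖x‖^2 * ub := mul_le_mul_of_nonneg_left hlt.le (sq_nonneg _)
        _ = ub * ‖x‖^2 := by ring
  -- operator norm bound
  have hptw : ∀ x : H, ‖(B - (-((t:ℂ)*c)) • (1 : H →L[ℂ] H)) x‖^2 ≤ M * ‖x‖^2 := by
    intro x
    have h1 : (B - (-((t:ℂ)*c)) • (1 : H →L[ℂ] H)) x = B x + ((t:ℂ)*c) • x := by
      simp [ContinuousLinearMap.sub_apply, ContinuousLinearMap.smul_apply,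
        ContinuousLinearMap.one_apply, sub_neg_eq_add, neg_smul]
    rw [h1, norm_add_sq (𝕜 := ℂ)]
    have h2 : RCLike.re ⟪B x, ((t:ℂ)*c) • x⟫ = t * ((starRingEnd ℂ) c * ⟪x, B x⟫).re := by
      rw [inner_smul_right]
      have hconj : ⟪B x, x⟫ = (starRingEnd ℂ) ⟪x, B x⟫ := by rw [inner_conj_symm]
      simp only [RCLike.re_to_complex]
      rw [hconj, mul_assoc, Complex.re_ofReal_mul]
      have : ((starRingEnd ℂ) c * ⟪x, B x⟫).re
          = (c * (starRingEnd ℂ) ⟪x, B x⟫).re := by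
        rw [← Complex.conj_re (c * (starRingEnd ℂ) ⟪x, B x⟫), map_mul, Complex.conj_conj]
      rw [this]
    have h3 : ‖((t:ℂ)*c) • x‖^2 = t^2*‖c‖^2*‖x‖^2 := by
      rw [norm_smul, norm_mul, Complex.norm_real, Real.norm_eq_abs, abs_of_pos ht0]
      ring
    have h4 : ‖B x‖^2 ≤ ‖B‖^2 * ‖x‖^2 := by
      have := B.le_opNorm x
      nlinarith [norm_nonneg (B x), norm_nonneg B, norm_nonneg x]
    have h5 := hfx x
    have h6 := mul_le_mul_of_nonneg_left h5 ht0.le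
    rw [h2, h3, hM]
    nlinarith [sq_nonneg ‖x‖]
  have hBop : ‖B - (-((t:ℂ)*c)) • (1 : H →L[ℂ] H)‖ ≤ Real.sqrt M := by
    apply ContinuousLinearMap.opNorm_le_bound _ (Real.sqrt_nonneg M)
    intro x
    have := hptw x
    calc ‖(B - (-((t:ℂ)*c)) • (1 : H →L[ℂ] H)) x‖
        = Real.sqrt (‖(B - (-((t:ℂ)*c)) • (1 : H →L[ℂ] H)) x‖^2) :=
          (Real.sqrt_sq (norm_nonneg _)).symm
      _ ≤ Real.sqrt (M * ‖x‖^2) := Real.sqrt_le_sqrt this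
      _ = Real.sqrt M * ‖x‖ := by
          rw [Real.sqrt_mul hM0, Real.sqrt_sq (norm_nonneg _)]
  -- distance estimate
  have hdist : dist w (-((t:ℂ)*c)) ≤ Real.sqrt M :=
    le_trans (nrSet_dist_le A _ hw) (le_trans (hn _) hBop)
  have hdist2 : (dist w (-((t:ℂ)*c)))^2 ≤ M := by
    have := pow_le_pow_left₀ dist_nonneg hdist 2
    rwa [Real.sq_sqrt hM0] at this
  have hwn : (dist w (-((t:ℂ)*c)))^2 = ‖w‖^2 + 2*t*((starRingEnd ℂ) c * w).re + t^2*‖c‖^2 := by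
    rw [Complex.dist_eq, sub_neg_eq_add, Complex.sq_norm, Complex.normSq_add]
    have e1 : Complex.normSq w = ‖w‖^2 := by
      rw [Complex.normSq_eq_norm_sq]
    have e2 : Complex.normSq ((t:ℂ)*c) = t^2 * ‖c‖^2 := by
      rw [Complex.normSq_mul, Complex.normSq_ofReal, Complex.normSq_eq_norm_sq]
      ring
    have e3 : (w * (starRingEnd ℂ) ((t:ℂ)*c)).re = t * ((starRingEnd ℂ) c * w).re := by
      rw [map_mul, Complex.conj_ofReal, show w * ((t:ℝ) * (starRingEnd ℂ) c)
        = (t:ℝ) * ((starRingEnd ℂ) c * w) from by ring, Complex.re_ofReal_mul]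
    rw [e1, e2, e3]
    ring
  rw [hwn] at hdist2
  have hB1 : ‖B‖^2 + 1 ≤ 2*δ*t := by
    rw [div_le_iff₀ (by positivity)] at ht1
    linarith
  have hfww : ((starRingEnd ℂ) c * w).re = ub + δ := by
    rw [← hfc w, hδ]
    ring
  rw [hfww] at hdist2
  nlinarith [sq_nonneg ‖w‖]

open Matrix
open scoped ComplexOrder

/-- The numerical range of a complex matrix, w.r.t. the Euclidean inner product. -/
def numRange {m : ℕ} (M : Matrix (Fin m) (Fin m) ℂ) : Set ℂ :=
  {z : ℂ | ∃ x : EuclideanSpace ℂ (Fin m), ‖x‖ = 1 ∧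
    (inner ℂ x (Matrix.toEuclideanCLM (𝕜 := ℂ) M x) : ℂ) = z}

set_option maxHeartbeats 1000000 in
/-- With `T = U·P` the polar decomposition of an invertible matrix,
`P = Σᵢ sᵢ Eᵢ` a spectral decomposition, and positive functions `φ, ψ` with
`φ(s,s) = ψ(s,s) = s` such that the associated double-operator-integral transformers
satisfy `‖Σᵢⱼ φ(sᵢ,sⱼ)EᵢXEⱼ‖ ≤ ‖Σᵢⱼ ψ(sᵢ,sⱼ)EᵢXEⱼ‖` (spectral norm) for all `X`,
the closure of the numerical range of `Δ_φ(T) = Σᵢⱼ φ(sᵢ,sⱼ)EᵢUEⱼ` is contained in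
that of `Δ_ψ(T) = Σᵢⱼ ψ(sᵢ,sⱼ)EᵢUEⱼ`. -/
theorem stmt_16 (m : ℕ) (hm : 1 ≤ m) (T : Matrix (Fin m) (Fin m) ℂ) (hT : IsUnit T.det)
    (U P : Matrix (Fin m) (Fin m) ℂ)
    (hU : U ∈ Matrix.unitaryGroup (Fin m) ℂ)
    (hP : P.PosSemidef) (hP2 : P * P = Tᴴ * T) (hpolar : T = U * P)
    (k : ℕ) (s : Fin k → ℝ) (hs : ∀ i, 0 < s i)
    (E : Fin k → Matrix (Fin m) (Fin m) ℂ)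
    (hEherm : ∀ i, (E i).IsHermitian) (hEidem : ∀ i, E i * E i = E i)
    (hEorth : ∀ i j, i ≠ j → E i * E j = 0) (hEsum : ∑ i, E i = 1)
    (hPdec : P = ∑ i, (s i : ℂ) • E i)
    (φ ψ : ℝ → ℝ → ℝ)
    (hφpos : ∀ s' t' : ℝ, 0 < s' → 0 < t' → 0 < φ s' t')
    (hψpos : ∀ s' t' : ℝ, 0 < s' → 0 < t' → 0 < ψ s' t')
    (hφdiag : ∀ s' : ℝ, 0 < s' → φ s' s' = s')
    (hψdiag : ∀ s' : ℝ, 0 < s' → ψ s' s' = s')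
    (hnorm : ∀ X : Matrix (Fin m) (Fin m) ℂ,
      ‖Matrix.toEuclideanCLM (𝕜 := ℂ)
          (∑ i, ∑ j, (φ (s i) (s j) : ℂ) • (E i * X * E j))‖ ≤
        ‖Matrix.toEuclideanCLM (𝕜 := ℂ)
          (∑ i, ∑ j, (ψ (s i) (s j) : ℂ) • (E i * X * E j))‖) :
    closure (numRange (∑ i, ∑ j, (φ (s i) (s j) : ℂ) • (E i * U * E j))) ⊆
      closure (numRange (∑ i, ∑ j, (ψ (s i) (s j) : ℂ) • (E i * U * E j))) := by
  classical
  set Am : Matrix (Fin m) (Fin m) ℂ := ∑ i, ∑ j, (φ (s i) (s j) : ℂ) • (E i * U * E j) with hAm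
  set Bm : Matrix (Fin m) (Fin m) ℂ := ∑ i, ∑ j, (ψ (s i) (s j) : ℂ) • (E i * U * E j) with hBm
  set Q : Matrix (Fin m) (Fin m) ℂ := ∑ l, ((s l : ℂ)⁻¹) • E l with hQ
  have hsne : ∀ i, (s i : ℂ) ≠ 0 := fun i => by exact_mod_cast (hs i).ne'
  have hEQ : ∀ i j, E i * Q * E j = if i = j then ((s i : ℂ)⁻¹) • E i else 0 := by
    intro i j
    have h0 : E i * Q * E j = ∑ l, ((s l : ℂ)⁻¹) • (E i * E l * E j) := by
      rw [hQ, Finset.mul_sum, Finset.sum_mul]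
      apply Finset.sum_congr rfl
      intro l _
      rw [mul_smul_comm, smul_mul_assoc]
    rw [h0, Finset.sum_eq_single i]
    · split_ifs with h
      · subst h
        rw [hEidem i, hEidem i]
      · rw [hEidem i, hEorth i j h, smul_zero]
    · intro l _ hl
      rw [hEorth i l (Ne.symm hl), zero_mul, smul_zero]
    · intro h
      exact absurd (Finset.mem_univ i) h
  have hQsum : ∀ (χ : ℝ → ℝ → ℝ), (∀ s', 0 < s' → χ s' s' = s') →
      ∑ i, ∑ j, (χ (s i) (s j) : ℂ) • (E i * Q * E j) = 1 := by
    intro χ hχ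
    have h1 : ∀ i, ∑ j, (χ (s i) (s j) : ℂ) • (E i * Q * E j) = E i := by
      intro i
      rw [Finset.sum_eq_single i]
      · rw [hEQ i i, if_pos rfl, smul_smul]
        have h2 : (χ (s i) (s i) : ℂ) = (s i : ℂ) := by rw [hχ (s i) (hs i)]
        rw [h2, mul_inv_cancel₀ (hsne i), one_smul]
      · intro j _ hj
        rw [hEQ i j, if_neg (fun h => hj h.symm), smul_zero]
      · intro h
        exact absurd (Finset.mem_univ i) h
    rw [Finset.sum_congr rfl (fun i _ => h1 i), hEsum]
  have hkey : ∀ (χ : ℝ → ℝ → ℝ), (∀ s', 0 < s' → χ s' s' = s') → ∀ z : ℂ,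
      (∑ i, ∑ j, (χ (s i) (s j) : ℂ) • (E i * (U - z • Q) * E j))
        = (∑ i, ∑ j, (χ (s i) (s j) : ℂ) • (E i * U * E j)) - z • 1 := by
    intro χ hχ z
    have h1 : ∀ i j, (χ (s i) (s j) : ℂ) • (E i * (U - z • Q) * E j)
        = (χ (s i) (s j) : ℂ) • (E i * U * E j)
          - z • ((χ (s i) (s j) : ℂ) • (E i * Q * E j)) := by
      intro i j
      rw [mul_sub, sub_mul, smul_sub]
      congr 1
      rw [mul_smul_comm, smul_mul_assoc, smul_comm]
    simp_rw [h1, Finset.sum_sub_distrib, ← Finset.smul_sum]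
    rw [hQsum χ hχ]
  have hmap : ∀ (Mx : Matrix (Fin m) (Fin m) ℂ) (z : ℂ),
      Matrix.toEuclideanCLM (𝕜 := ℂ) (Mx - z • 1)
        = Matrix.toEuclideanCLM (𝕜 := ℂ) Mx
          - z • (1 : EuclideanSpace ℂ (Fin m) →L[ℂ] EuclideanSpace ℂ (Fin m)) := by
    intro Mx z
    rw [map_sub, _root_.map_smul, _root_.map_one]
  have hAB : ∀ z : ℂ, ‖Matrix.toEuclideanCLM (𝕜 := ℂ) Am
        - z • (1 : EuclideanSpace ℂ (Fin m) →L[ℂ] EuclideanSpace ℂ (Fin m))‖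
      ≤ ‖Matrix.toEuclideanCLM (𝕜 := ℂ) Bm - z • 1‖ := by
    intro z
    have h := hnorm (U - z • Q)
    rw [hkey φ hφdiag z, hkey ψ hψdiag z, ← hAm, ← hBm, hmap, hmap] at h
    exact h
  have hex : ∃ x : EuclideanSpace ℂ (Fin m), ‖x‖ = 1 := by
    refine ⟨EuclideanSpace.single ⟨0, hm⟩ (1:ℂ), ?_⟩
    rw [EuclideanSpace.norm_single]
    simp
  exact nr_closure_subset hex hAB
end
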